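/- The matrix (G_{m,n})_{m,n=0,...,N} with G_{m,n} = C·t^{m+n+3}·(m+n+2)! for constants C > 0 and t > 0 is positive definite. -/

import Mathlib

open Nat Matrix MeasureTheory Set

private lemma aux_integrable {t : ℝ} (ht : 0 < t) (k : ℕ) :
    IntegrableOn (fun x : ℝ => x ^ k * Real.exp (-(x / t))) (Ioi 0) := by
  have h := integrableOn_rpow_mul_exp_neg_mul_rpow (p := 1) (s := (k : ℝ)) (b := 1 / t)
    (lt_of_lt_of_le neg_one_lt_zero (Nat.cast_nonneg k)) one_pos (by positivity)
  have heq : (fun x : ℝ => x ^ ((k : ℝ)) * Real.exp (-(1 / t) * x ^ (1 : ℝ)))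
      = fun x : ℝ => x ^ k * Real.exp (-(x / t)) := by
    funext x
    rw [Real.rpow_one, Real.rpow_natCast]
    congr 1
    ring
  rwa [heq] at h

private lemma aux_integral {t : ℝ} (ht : 0 < t) (k : ℕ) :
    ∫ x in Ioi (0 : ℝ), x ^ k * Real.exp (-(x / t)) = t ^ (k + 1) * (k ! : ℝ) := by
  have h := Real.integral_rpow_mul_exp_neg_mul_Ioi (a := (k : ℝ) + 1) (r := 1 / t)
    (by positivity) (by positivity)
  rw [one_div_one_div] at h
  have heq : (fun x : ℝ => x ^ ((k : ℝ) + 1 - 1) * Real.exp (-(1 / t * x)))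
      = fun x : ℝ => x ^ k * Real.exp (-(x / t)) := by
    funext x
    rw [add_sub_cancel_right, Real.rpow_natCast]
    congr 1
    ring
  rw [heq] at h
  rw [h, Real.Gamma_nat_eq_factorial, show ((k : ℝ) + 1) = ((k + 1 : ℕ) : ℝ) by push_cast; ring,
    Real.rpow_natCast]

/-- The matrix `G_{m,n} = C t^{m+n+3} (m+n+2)!` for `C > 0`, `t > 0` is positive definite. -/
theorem G_matrix_posDef (N : ℕ) (C t : ℝ) (hC : 0 < C) (ht : 0 < t) :
    (Matrix.of fun m n : Fin (N + 1) =>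
        C * t ^ ((m : ℕ) + n + 3) * (((m : ℕ) + n + 2)! : ℝ)).PosDef := by
  refine Matrix.PosDef.of_dotProduct_mulVec_pos ?_ ?_
  · -- Hermitian (symmetric)
    rw [Matrix.IsHermitian]
    ext m n
    simp only [Matrix.conjTranspose_apply, Matrix.of_apply, star_trivial]
    rw [Nat.add_comm (n : ℕ) (m : ℕ)]
  · intro v hv
    obtain ⟨m0, hm0⟩ : ∃ m, v m ≠ 0 := by
      by_contra h; push_neg at h; exact hv (funext h)
    -- the polynomial `P(x) = ∑ v m * x^(m+1)`
    set P : Polynomial ℝ :=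
      ∑ m : Fin (N + 1), Polynomial.C (v m) * Polynomial.X ^ ((m : ℕ) + 1) with hP
    have hPcoeff : ∀ m : Fin (N + 1), P.coeff ((m : ℕ) + 1) = v m := by
      intro m
      rw [hP, Polynomial.finset_sum_coeff, Finset.sum_eq_single m]
      · simp
      · intro n _ hnm
        rw [Polynomial.coeff_C_mul, Polynomial.coeff_X_pow, if_neg, mul_zero]
        intro h
        exact hnm (Fin.ext (by omega))
      · simp
    have hPne : P ≠ 0 := fun h => hm0 (by rw [← hPcoeff m0, h, Polynomial.coeff_zero])
    have hPeval : ∀ x : ℝ, P.eval x = ∑ m : Fin (N + 1), v m * x ^ ((m : ℕ) + 1) := by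
      intro x
      rw [hP, Polynomial.eval_finset_sum]
      simp
    set f : ℝ → ℝ := fun x => (P.eval x) ^ 2 * Real.exp (-(x / t)) with hf
    have key : ∀ x : ℝ, (∑ m : Fin (N + 1), ∑ n : Fin (N + 1),
        v m * v n * (x ^ ((m : ℕ) + (n : ℕ) + 2) * Real.exp (-(x / t)))) = f x := by
      intro x
      simp only [hf]
      rw [hPeval x, sq, Finset.sum_mul_sum, Finset.sum_mul]
      refine Finset.sum_congr rfl fun m _ => ?_
      rw [Finset.sum_mul]
      refine Finset.sum_congr rfl fun n _ => ?_
      rw [show (m : ℕ) + (n : ℕ) + 2 = ((m : ℕ) + 1) + ((n : ℕ) + 1) by ring, pow_add]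
      ring
    have hg : IntegrableOn (fun x : ℝ => ∑ m : Fin (N + 1), ∑ n : Fin (N + 1),
        v m * v n * (x ^ ((m : ℕ) + (n : ℕ) + 2) * Real.exp (-(x / t)))) (Ioi 0) := by
      apply integrable_finset_sum
      intro m _
      apply integrable_finset_sum
      intro n _
      exact (aux_integrable ht _).const_mul _
    have hfint : IntegrableOn f (Ioi 0) := by
      rw [show f = fun x : ℝ => ∑ m : Fin (N + 1), ∑ n : Fin (N + 1),
        v m * v n * (x ^ ((m : ℕ) + (n : ℕ) + 2) * Real.exp (-(x / t)))
        from funext fun x => (key x).symm]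
      exact hg
    have hfnn : 0 ≤ f := by
      intro x
      have : (0:ℝ) ≤ (P.eval x) ^ 2 * Real.exp (-(x / t)) := by positivity
      simpa [hf] using this
    -- value of the quadratic form
    have hQ : v ⬝ᵥ ((Matrix.of fun m n : Fin (N + 1) =>
        C * t ^ ((m : ℕ) + n + 3) * (((m : ℕ) + n + 2)! : ℝ)) *ᵥ v)
        = C * ∫ x in Ioi (0 : ℝ), f x := by
      have h1 : ∫ x in Ioi (0 : ℝ), f x = ∑ m : Fin (N + 1), ∑ n : Fin (N + 1),
          v m * v n * (t ^ ((m : ℕ) + (n : ℕ) + 3) * (((m : ℕ) + (n : ℕ) + 2)! : ℝ)) := by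
        rw [show f = fun x : ℝ => ∑ m : Fin (N + 1), ∑ n : Fin (N + 1),
          v m * v n * (x ^ ((m : ℕ) + (n : ℕ) + 2) * Real.exp (-(x / t)))
          from funext fun x => (key x).symm]
        rw [integral_finset_sum _ (fun m _ => integrable_finset_sum _
          (fun n _ => (aux_integrable ht _).const_mul _))]
        refine Finset.sum_congr rfl fun m _ => ?_
        rw [integral_finset_sum _ (fun n _ => (aux_integrable ht _).const_mul _)]
        refine Finset.sum_congr rfl fun n _ => ?_
        rw [MeasureTheory.integral_const_mul, aux_integral ht]
      rw [h1]
      simp only [dotProduct, Matrix.mulVec, Matrix.of_apply, Finset.mul_sum,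
        Finset.sum_mul]
      refine Finset.sum_congr rfl fun m _ => ?_
      refine Finset.sum_congr rfl fun n _ => ?_
      ring
    -- positivity of the integral
    have hroots : {x : ℝ | P.IsRoot x}.Finite := Polynomial.finite_setOf_isRoot hPne
    have hsub : Ioi (0 : ℝ) \ {x : ℝ | P.IsRoot x} ⊆ Function.support f := by
      intro x hx
      have hx2 : P.eval x ≠ 0 := hx.2
      simp only [Function.mem_support, hf]
      exact mul_ne_zero (pow_ne_zero 2 hx2) (Real.exp_ne_zero _)
    have hpos : 0 < ∫ x in Ioi (0 : ℝ), f x := by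
      rw [integral_pos_iff_support_of_nonneg hfnn hfint]
      refine lt_of_lt_of_le ?_ (measure_mono hsub)
      rw [Measure.restrict_apply (measurableSet_Ioi.diff hroots.measurableSet),
        Set.inter_eq_self_of_subset_left Set.diff_subset,
        measure_diff_null (hroots.measure_zero _), Real.volume_Ioi]
      exact ENNReal.zero_lt_top
    have : star v = v := by funext i; simp
    rw [this, hQ]
    positivity
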